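/- (Theorem 1: convergence of the PnP primal-dual algorithm.) Let Φ : ℝ^N → ℝ^M be a linear map with adjoint Φᵀ and operator norm ‖Φ‖, let y ∈ ℝ^M, ε > 0, and let B₂(y, ε) = {v ∈ ℝ^M : ‖v − y‖ ≤ ε}. Let Q : ℝ^N → ℝ^N be a 1-Lipschitz map, let J = (Id + Q)/2, and let B̃ = J⁻¹ − Id be the set-valued operator defined by B̃(x) = {z − x : z ∈ ℝ^N, J z = x}. Let τ > 0 and σ > 0 satisfy τ σ ‖Φ‖² < 1. Assume there exists at least one x̂ ∈ ℝ^N solving the inclusion 0 ∈ Φᵀ N_{B₂(y,ε)}(Φ x̂) + τ⁻¹ • B̃(x̂), i.e., there exist u ∈ N_{B₂(y,ε)}(Φ x̂) and b ∈ B̃(x̂) with Φᵀ u + τ⁻¹ b = 0. Then for any initialization (x₀, u₀) ∈ ℝ^N × ℝ^M, the sequence generated by the iterations x_{k+1} = J(x_k − τ Φᵀ u_k), ũ_k = u_k + σ Φ(2 x_{k+1} − x_k), u_{k+1} = ũ_k − σ P_{B₂(y,ε)}(ũ_k / σ), where P_{B₂(y,ε)} is the metric projection onto B₂(y, ε), satisfies: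 (x_k) converges to a point x* ∈ ℝ^N such that 0 ∈ Φᵀ N_{B₂(y,ε)}(Φ x*) + τ⁻¹ • B̃(x*). -/

import Mathlib

open RealInnerProductSpace

set_option maxHeartbeats 4000000 in
/-- Theorem 1: convergence of the PnP primal-dual algorithm. If `Q` is 1-Lipschitz,
`J = (Id + Q)/2`, `τσ‖Φ‖² < 1`, and the inclusion
`0 ∈ Φᵀ N_{B₂(y,ε)}(Φ x̂) + τ⁻¹ • B̃(x̂)` has a solution, then the primal iterates of
the PnP primal-dual algorithm converge to a solution of this inclusion. -/
theorem stmt_13 {n m : ℕ}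
    (Φ : EuclideanSpace ℝ (Fin n) →L[ℝ] EuclideanSpace ℝ (Fin m))
    (Φt : EuclideanSpace ℝ (Fin m) →L[ℝ] EuclideanSpace ℝ (Fin n))
    (hadj : ∀ (x : EuclideanSpace ℝ (Fin n)) (u : EuclideanSpace ℝ (Fin m)),
      ⟪Φ x, u⟫ = ⟪x, Φt u⟫)
    (y : EuclideanSpace ℝ (Fin m)) (ε : ℝ) (hε : 0 < ε)
    (Q : EuclideanSpace ℝ (Fin n) → EuclideanSpace ℝ (Fin n))
    (hQ : ∀ x x' : EuclideanSpace ℝ (Fin n), ‖Q x - Q x'‖ ≤ ‖x - x'‖)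
    (J : EuclideanSpace ℝ (Fin n) → EuclideanSpace ℝ (Fin n))
    (hJ : ∀ x : EuclideanSpace ℝ (Fin n), J x = (2 : ℝ)⁻¹ • (x + Q x))
    (B : EuclideanSpace ℝ (Fin n) → Set (EuclideanSpace ℝ (Fin n)))
    (hB : ∀ x : EuclideanSpace ℝ (Fin n),
      B x = {b : EuclideanSpace ℝ (Fin n) | ∃ z, J z = x ∧ b = z - x})
    (N : EuclideanSpace ℝ (Fin m) → Set (EuclideanSpace ℝ (Fin m)))
    (hN : ∀ v : EuclideanSpace ℝ (Fin m),
      N v = {u : EuclideanSpace ℝ (Fin m) |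
        ‖v - y‖ ≤ ε ∧ ∀ c : EuclideanSpace ℝ (Fin m), ‖c - y‖ ≤ ε → ⟪u, c - v⟫ ≤ 0})
    (τ σ : ℝ) (hτ : 0 < τ) (hσ : 0 < σ) (hstep : τ * σ * ‖Φ‖ ^ 2 < 1)
    -- existence of a solution to the monotone inclusion
    (hsol : ∃ (xh : EuclideanSpace ℝ (Fin n)) (u : EuclideanSpace ℝ (Fin m))
      (b : EuclideanSpace ℝ (Fin n)),
        u ∈ N (Φ xh) ∧ b ∈ B xh ∧ Φt u + τ⁻¹ • b = 0)
    -- `P` is the metric projection onto `B₂(y, ε)`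
    (P : EuclideanSpace ℝ (Fin m) → EuclideanSpace ℝ (Fin m))
    (hP : ∀ z : EuclideanSpace ℝ (Fin m), ‖P z - y‖ ≤ ε ∧
      ∀ w : EuclideanSpace ℝ (Fin m), ‖w - y‖ ≤ ε → ‖z - P z‖ ≤ ‖z - w‖)
    -- the iterates
    (x₀ : EuclideanSpace ℝ (Fin n)) (u₀ : EuclideanSpace ℝ (Fin m))
    (x : ℕ → EuclideanSpace ℝ (Fin n)) (u ut : ℕ → EuclideanSpace ℝ (Fin m))
    (hx0 : x 0 = x₀) (hu0 : u 0 = u₀)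
    (hxk : ∀ k : ℕ, x (k + 1) = J (x k - τ • Φt (u k)))
    (hutk : ∀ k : ℕ, ut k = u k + σ • Φ ((2 : ℝ) • x (k + 1) - x k))
    (huk : ∀ k : ℕ, u (k + 1) = ut k - σ • P (σ⁻¹ • ut k)) :
    ∃ xs : EuclideanSpace ℝ (Fin n),
      Filter.Tendsto x Filter.atTop (nhds xs) ∧
      ∃ (us : EuclideanSpace ℝ (Fin m)) (b : EuclideanSpace ℝ (Fin n)),
        us ∈ N (Φ xs) ∧ b ∈ B xs ∧ Φt us + τ⁻¹ • b = 0 := by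
  classical
  obtain ⟨xh, uh, bh, huhN, hbhB, hsumh⟩ := hsol
  have hτ' : τ ≠ 0 := ne_of_gt hτ
  have hσ' : σ ≠ 0 := ne_of_gt hσ
  have hadj' : ∀ (v : EuclideanSpace ℝ (Fin m)) (p : EuclideanSpace ℝ (Fin n)),
      ⟪Φt v, p⟫ = ⟪Φ p, v⟫ := by
    intro v p
    rw [real_inner_comm, ← hadj]
  -- projection variational inequality
  have hPVI : ∀ z w : EuclideanSpace ℝ (Fin m), ‖w - y‖ ≤ ε → ⟪z - P z, w - P z⟫ ≤ 0 := by
    intro z w hw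
    by_contra hpos
    push_neg at hpos
    have hmem : ∀ t : ℝ, 0 ≤ t → t ≤ 1 → ‖(P z + t • (w - P z)) - y‖ ≤ ε := by
      intro t ht0 ht1
      have he : (P z + t • (w - P z)) - y = (1 - t) • (P z - y) + t • (w - y) := by module
      rw [he]
      calc ‖(1-t) • (P z - y) + t • (w - y)‖ ≤ ‖(1-t) • (P z - y)‖ + ‖t • (w - y)‖ :=
            norm_add_le _ _
        _ = (1-t)*‖P z - y‖ + t*‖w - y‖ := by
            rw [norm_smul, norm_smul, Real.norm_of_nonneg (by linarith), Real.norm_of_nonneg ht0]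
        _ ≤ (1-t)*ε + t*ε := by
            have h1 := (hP z).1
            gcongr <;> linarith
        _ = ε := by ring
    have hineq : ∀ t : ℝ, 0 ≤ t → t ≤ 1 →
        2*t*⟪z - P z, w - P z⟫ ≤ t^2*‖w - P z‖^2 := by
      intro t ht0 ht1
      have h := (hP z).2 _ (hmem t ht0 ht1)
      have h2 : ‖z - P z‖^2 ≤ ‖z - (P z + t • (w - P z))‖^2 := by
        nlinarith [norm_nonneg (z - P z), norm_nonneg (z - (P z + t • (w - P z)))]
      have hexp : ‖z - (P z + t • (w - P z))‖^2
          = ‖z - P z‖^2 - 2*t*⟪z - P z, w - P z⟫ + t^2*‖w - P z‖^2 := by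
        have he : z - (P z + t • (w - P z)) = (z - P z) - t • (w - P z) := by module
        rw [he, norm_sub_sq_real, real_inner_smul_right, norm_smul, Real.norm_eq_abs,
          mul_pow, sq_abs]
        ring
      linarith
    set s := ⟪z - P z, w - P z⟫ with hsdef
    set q := ‖w - P z‖^2 with hqdef
    have hq0 : 0 ≤ q := sq_nonneg _
    rcases eq_or_lt_of_le hq0 with hq | hq
    · have h := hineq 1 zero_le_one le_rfl
      rw [← hq] at h
      nlinarith
    · set t := min 1 (s/q) with htdef
      have ht0 : 0 < t := lt_min one_pos (div_pos hpos hq)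
      have ht1 : t ≤ 1 := min_le_left _ _
      have htq : t*q ≤ s := by
        have h1 : t ≤ s/q := min_le_right _ _
        exact (le_div_iff₀ hq).mp h1
      have h := hineq t ht0.le ht1
      nlinarith
  -- P is nonexpansive, hence continuous
  have hPlip : ∀ z z' : EuclideanSpace ℝ (Fin m), ‖P z - P z'‖ ≤ ‖z - z'‖ := by
    intro z z'
    have h1 := hPVI z (P z') (hP z').1
    have h2 := hPVI z' (P z) (hP z).1
    have key : ‖P z - P z'‖^2 ≤ ⟪z - z', P z - P z'⟫ := by
      have e1 : ⟪z - P z, P z' - P z⟫ = -⟪z - P z, P z - P z'⟫ := by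
        rw [← inner_neg_right]
        congr 1
        abel
      rw [e1] at h1
      have h3 : 0 ≤ ⟪(z - P z) - (z' - P z'), P z - P z'⟫ := by
        rw [inner_sub_left]
        linarith
      have e3 : (z - P z) - (z' - P z') = (z - z') - (P z - P z') := by abel
      rw [e3, inner_sub_left, real_inner_self_eq_norm_sq] at h3
      linarith
    have hCS := real_inner_le_norm (z - z') (P z - P z')
    rcases eq_or_lt_of_le (norm_nonneg (P z - P z')) with h0 | h0
    · rw [← h0]; exact norm_nonneg _
    · nlinarith
  have hPcont : Continuous P := by
    have hl : LipschitzWith 1 P := LipschitzWith.of_dist_le_mul (fun a b => by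
      rw [dist_eq_norm, dist_eq_norm]
      simpa using hPlip a b)
    exact hl.continuous
  -- J is firmly nonexpansive (monotonicity of the associated operator) and continuous
  have hJmono : ∀ z z' : EuclideanSpace ℝ (Fin n),
      0 ≤ ⟪(z - J z) - (z' - J z'), J z - J z'⟫ := by
    intro z z'
    have e1 : (z - J z) - (z' - J z') = (2:ℝ)⁻¹ • ((z - z') - (Q z - Q z')) := by
      rw [hJ z, hJ z']; module
    have e2 : J z - J z' = (2:ℝ)⁻¹ • ((z - z') + (Q z - Q z')) := by
      rw [hJ z, hJ z']; module
    have hQn := hQ z z'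
    rw [e1, e2, real_inner_smul_left, real_inner_smul_right]
    generalize hp : z - z' = p at *
    generalize hq : Q z - Q z' = q at *
    rw [inner_sub_left, inner_add_right, inner_add_right, real_inner_comm q p,
      real_inner_self_eq_norm_sq, real_inner_self_eq_norm_sq]
    nlinarith [hQn, norm_nonneg p, norm_nonneg q]
  have hJcont : Continuous J := by
    have hQc : Continuous Q := by
      have hl : LipschitzWith 1 Q := LipschitzWith.of_dist_le_mul (fun a b => by
        rw [dist_eq_norm, dist_eq_norm]
        simpa using hQ a b)
      exact hl.continuous
    have hJe : J = fun z => (2:ℝ)⁻¹ • (z + Q z) := funext hJ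
    rw [hJe]
    exact (continuous_id.add hQc).const_smul ((2:ℝ)⁻¹)
  -- the primal-dual metric
  set Msq : EuclideanSpace ℝ (Fin n) → EuclideanSpace ℝ (Fin m) → ℝ :=
    fun p q => τ⁻¹*‖p‖^2 + σ⁻¹*‖q‖^2 - 2*⟪Φ p, q⟫ with hMsqdef
  obtain ⟨δ, hδpos, hlow⟩ : ∃ δ : ℝ, 0 < δ ∧
      ∀ p q, δ*(‖p‖^2 + ‖q‖^2) ≤ Msq p q := by
    have hc0 : (0:ℝ) ≤ ‖Φ‖ := norm_nonneg _
    set c := ‖Φ‖ with hcdef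
    set a := Real.sqrt τ with hadef
    set b := Real.sqrt σ with hbdef
    have ha2 : a^2 = τ := Real.sq_sqrt hτ.le
    have hb2 : b^2 = σ := Real.sq_sqrt hσ.le
    have ha0 : 0 < a := Real.sqrt_pos.mpr hτ
    have hb0 : 0 < b := Real.sqrt_pos.mpr hσ
    have habc : a*b*c < 1 := by
      have h2 : (a*b*c)^2 < 1 := by
        have he : (a*b*c)^2 = τ*σ*c^2 := by rw [mul_pow, mul_pow, ha2, hb2]
        rw [he]; exact hstep
      nlinarith [mul_nonneg (mul_nonneg ha0.le hb0.le) hc0]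
    have habc' : (0:ℝ) ≤ 1 - a*b*c := by linarith
    have hτσ : (τ:ℝ) + σ ≠ 0 := by positivity
    refine ⟨(1 - a*b*c)/(τ+σ), div_pos (by linarith) (by linarith), ?_⟩
    intro p q
    have hCS : ⟪Φ p, q⟫ ≤ c*(‖p‖*‖q‖) := by
      calc ⟪Φ p, q⟫ ≤ ‖Φ p‖*‖q‖ := real_inner_le_norm _ _
        _ ≤ (c*‖p‖)*‖q‖ := by
            have := Φ.le_opNorm p
            gcongr
        _ = c*(‖p‖*‖q‖) := by ring
    set s := ‖p‖ with hsdef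
    set t := ‖q‖ with htdef
    have hs0 : 0 ≤ s := norm_nonneg _
    have ht0 : 0 ≤ t := norm_nonneg _
    have key2 : 2*c*(s*t)*(τ*σ) ≤ (a*b*c)*(σ*s^2 + τ*t^2) := by
      rw [← ha2, ← hb2]
      nlinarith [mul_nonneg (mul_nonneg ha0.le hb0.le)
        (mul_nonneg hc0 (sq_nonneg (b*s - a*t)))]
    have hM' : τ⁻¹*s^2 + σ⁻¹*t^2 - 2*(c*(s*t)) ≤ Msq p q := by
      simp only [hMsqdef, ← hsdef, ← htdef]
      linarith
    have hsuff : (1 - a*b*c)/(τ+σ)*(s^2+t^2) ≤ τ⁻¹*s^2 + σ⁻¹*t^2 - 2*(c*(s*t)) := by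
      rw [← mul_le_mul_iff_of_pos_right (show (0:ℝ) < τ*σ*(τ+σ) by positivity)]
      have e1 : (1 - a*b*c)/(τ+σ)*(s^2+t^2)*(τ*σ*(τ+σ))
          = (1 - a*b*c)*((s^2+t^2)*(τ*σ)) := by
        field_simp
      have e2 : (τ⁻¹*s^2 + σ⁻¹*t^2 - 2*(c*(s*t)))*(τ*σ*(τ+σ))
          = (σ*s^2 + τ*t^2 - 2*c*(s*t)*(τ*σ))*(τ+σ) := by
        field_simp
      rw [e1, e2]
      nlinarith [mul_le_mul_of_nonneg_right key2 (show (0:ℝ) ≤ τ+σ by linarith),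
        mul_nonneg habc' (show (0:ℝ) ≤ σ^2*s^2 + τ^2*t^2 by positivity)]
    linarith
  have hMsq0 : ∀ p q, 0 ≤ Msq p q := fun p q =>
    le_trans (by positivity) (hlow p q)
  have hMcont : Continuous (fun pq : EuclideanSpace ℝ (Fin n) × EuclideanSpace ℝ (Fin m) =>
      Msq pq.1 pq.2) := by
    simp only [hMsqdef]
    apply Continuous.sub
    · exact (continuous_const.mul ((continuous_fst.norm).pow 2)).add
        (continuous_const.mul ((continuous_snd.norm).pow 2))
    · exact continuous_const.mul ((Φ.continuous.comp continuous_fst).inner continuous_snd)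
  -- expansion identity
  have hexp : ∀ (w c : EuclideanSpace ℝ (Fin n)) (v e : EuclideanSpace ℝ (Fin m)),
      Msq (w + c) (v + e) = Msq w v + Msq c e
        + 2*(τ⁻¹*⟪c, w⟫ + σ⁻¹*⟪e, v⟫ - ⟪Φ c, v⟫ - ⟪Φ w, e⟫) := by
    intro w c v e
    simp only [hMsqdef]
    rw [norm_add_sq_real, norm_add_sq_real, map_add, inner_add_left, inner_add_right,
      inner_add_right, real_inner_comm w c, real_inner_comm v e]
    ring
  -- the key one-step Fejér inequality, valid for any solution of the inclusion
  have key : ∀ (xs : EuclideanSpace ℝ (Fin n)) (us : EuclideanSpace ℝ (Fin m))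
      (bs : EuclideanSpace ℝ (Fin n)), us ∈ N (Φ xs) → bs ∈ B xs →
      Φt us + τ⁻¹ • bs = 0 →
      ∀ k, Msq (x (k+1) - xs) (u (k+1) - us) + Msq (x k - x (k+1)) (u k - u (k+1))
        ≤ Msq (x k - xs) (u k - us) := by
    intro xs us bs husN hbsB hsum k
    rw [hN] at husN
    obtain ⟨hxsball, husN2⟩ := husN
    rw [hB] at hbsB
    obtain ⟨zs, hzs, hbszs⟩ := hbsB
    have hbs2 : bs = -(τ • Φt us) := by
      have h1 : τ⁻¹ • bs = -(Φt us) := by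
        have h := hsum
        rw [add_comm, add_eq_zero_iff_eq_neg] at h
        exact h
      calc bs = τ • (τ⁻¹ • bs) := by rw [smul_smul, mul_inv_cancel₀ hτ', one_smul]
        _ = τ • (-(Φt us)) := by rw [h1]
        _ = -(τ • Φt us) := smul_neg _ _
    have hb1 : J (x k - τ • Φt (u k)) = x (k+1) := (hxk k).symm
    have hmono1 : 0 ≤ ⟪((x k - τ • Φt (u k)) - x (k+1)) - bs, x (k+1) - xs⟫ := by
      have h := hJmono (x k - τ • Φt (u k)) zs
      rw [hb1, hzs, ← hbszs] at h
      exact h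
    have hv : P (σ⁻¹ • ut k) = σ⁻¹ • (u k - u (k+1)) + Φ ((2:ℝ) • x (k+1) - x k) := by
      have h1 : σ • P (σ⁻¹ • ut k) = ut k - u (k+1) := by rw [huk k]; abel
      have h2 : P (σ⁻¹ • ut k) = σ⁻¹ • (ut k - u (k+1)) := by
        rw [← h1, smul_smul, inv_mul_cancel₀ hσ', one_smul]
      rw [h2, hutk k]
      match_scalars <;> field_simp
    have hpball : ‖P (σ⁻¹ • ut k) - y‖ ≤ ε := (hP _).1
    have h2a : ⟪us, P (σ⁻¹ • ut k) - Φ xs⟫ ≤ 0 := husN2 _ hpball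
    have h2b : ⟪u (k+1), Φ xs - P (σ⁻¹ • ut k)⟫ ≤ 0 := by
      have hvi := hPVI (σ⁻¹ • ut k) (Φ xs) hxsball
      have hrep : u (k+1) = σ • (σ⁻¹ • ut k - P (σ⁻¹ • ut k)) := by
        rw [huk k]
        match_scalars <;> field_simp
      rw [hrep, real_inner_smul_left]
      exact mul_nonpos_iff.mpr (Or.inl ⟨hσ.le, hvi⟩)
    have hmono2 : 0 ≤ ⟪P (σ⁻¹ • ut k) - Φ xs, u (k+1) - us⟫ := by
      have e : ⟪P (σ⁻¹ • ut k) - Φ xs, u (k+1) - us⟫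
          = -⟪u (k+1), Φ xs - P (σ⁻¹ • ut k)⟫ - ⟪us, P (σ⁻¹ • ut k) - Φ xs⟫ := by
        rw [real_inner_comm, inner_sub_left,
          show Φ xs - P (σ⁻¹ • ut k) = -(P (σ⁻¹ • ut k) - Φ xs) by abel, inner_neg_right]
        ring
      rw [e]
      linarith
    have hsplit := hexp (x (k+1) - xs) (x k - x (k+1)) (u (k+1) - us) (u k - u (k+1))
    rw [show x (k+1) - xs + (x k - x (k+1)) = x k - xs by abel,
        show u (k+1) - us + (u k - u (k+1)) = u k - us by abel] at hsplit
    have hG : τ⁻¹*⟪x k - x (k+1), x (k+1) - xs⟫ + σ⁻¹*⟪u k - u (k+1), u (k+1) - us⟫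
        - ⟪Φ (x k - x (k+1)), u (k+1) - us⟫ - ⟪Φ (x (k+1) - xs), u k - u (k+1)⟫
        = τ⁻¹*⟪((x k - τ • Φt (u k)) - x (k+1)) - bs, x (k+1) - xs⟫
          + ⟪P (σ⁻¹ • ut k) - Φ xs, u (k+1) - us⟫ := by
      have e1 : ((x k - τ • Φt (u k)) - x (k+1)) - bs
          = (x k - x (k+1)) - τ • Φt (u k - u (k+1)) - τ • Φt (u (k+1) - us) := by
        rw [hbs2, map_sub, map_sub]
        module
      have e2 : P (σ⁻¹ • ut k) - Φ xs
          = σ⁻¹ • (u k - u (k+1)) - Φ (x k - x (k+1)) + Φ (x (k+1) - xs) := by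
        rw [hv]
        simp only [map_sub, map_smul]
        module
      rw [e1, e2]
      simp only [inner_sub_left, inner_add_left, real_inner_smul_left, hadj']
      field_simp
      ring
    have hfin : 0 ≤ τ⁻¹*⟪((x k - τ • Φt (u k)) - x (k+1)) - bs, x (k+1) - xs⟫ :=
      mul_nonneg (inv_nonneg.mpr hτ.le) hmono1
    rw [hG] at hsplit
    rw [hsplit]
    linarith only [hfin, hmono2]
  -- the Fejér sequence with respect to the given solution
  have hstep1 := key xh uh bh huhN hbhB hsumh
  set d : ℕ → ℝ := fun k => Msq (x k - xh) (u k - uh) with hddef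
  have hd0 : ∀ k, 0 ≤ d k := fun k => hMsq0 _ _
  have hdanti : Antitone d := antitone_nat_of_succ_le (fun k => by
    have h := hstep1 k
    have h2 := hMsq0 (x k - x (k+1)) (u k - u (k+1))
    simp only [hddef]
    linarith)
  have hbddd : BddBelow (Set.range d) := ⟨0, by rintro r ⟨k, rfl⟩; exact hd0 k⟩
  have hdconv : Filter.Tendsto d Filter.atTop (nhds (⨅ k, d k)) :=
    tendsto_atTop_ciInf hdanti hbddd
  have hdiff : Filter.Tendsto (fun k => Msq (x k - x (k+1)) (u k - u (k+1)))
      Filter.atTop (nhds 0) := by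
    have h2 : Filter.Tendsto (fun k => d (k+1)) Filter.atTop (nhds (⨅ k, d k)) := by
      have := hdconv.comp (Filter.tendsto_add_atTop_nat 1)
      simpa [Function.comp_def] using this
    have h1 : Filter.Tendsto (fun k => d k - d (k+1)) Filter.atTop (nhds 0) := by
      simpa using hdconv.sub h2
    apply squeeze_zero (fun k => hMsq0 _ _) (fun k => ?_) h1
    have h := hstep1 k
    simp only [hddef]
    linarith
  -- increments go to zero
  have hincr : ∀ (f : ℕ → ℝ), (∀ k, 0 ≤ f k) →
      (∀ k, δ * f k ≤ Msq (x k - x (k+1)) (u k - u (k+1))) →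
      Filter.Tendsto f Filter.atTop (nhds 0) := by
    intro f hf0 hfb
    have hdiffd : Filter.Tendsto (fun k => Msq (x k - x (k+1)) (u k - u (k+1)) / δ)
        Filter.atTop (nhds 0) := by simpa using hdiff.div_const δ
    apply squeeze_zero hf0 (fun k => ?_) hdiffd
    rw [le_div_iff₀ hδpos]
    have := hfb k
    linarith [this]
  have hdx2 : Filter.Tendsto (fun k => ‖x k - x (k+1)‖^2) Filter.atTop (nhds 0) := by
    apply hincr _ (fun k => sq_nonneg _) (fun k => ?_)
    have := hlow (x k - x (k+1)) (u k - u (k+1))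
    nlinarith [sq_nonneg ‖u k - u (k+1)‖, hδpos.le]
  have hdu2 : Filter.Tendsto (fun k => ‖u k - u (k+1)‖^2) Filter.atTop (nhds 0) := by
    apply hincr _ (fun k => sq_nonneg _) (fun k => ?_)
    have := hlow (x k - x (k+1)) (u k - u (k+1))
    nlinarith [sq_nonneg ‖x k - x (k+1)‖, hδpos.le]
  have hsqrt0 : ∀ (g : ℕ → ℝ), (∀ k, 0 ≤ g k) →
      Filter.Tendsto (fun k => (g k)^2) Filter.atTop (nhds 0) →
      Filter.Tendsto g Filter.atTop (nhds 0) := by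
    intro g hg0 hg2
    have h : Filter.Tendsto (fun k => Real.sqrt ((g k)^2)) Filter.atTop
        (nhds (Real.sqrt 0)) := (Real.continuous_sqrt.tendsto 0).comp hg2
    rw [Real.sqrt_zero] at h
    have he : (fun k => Real.sqrt ((g k)^2)) = g := funext fun k => Real.sqrt_sq (hg0 k)
    rwa [he] at h
  have hdx0 : Filter.Tendsto (fun k => x k - x (k+1)) Filter.atTop (nhds 0) := by
    rw [tendsto_zero_iff_norm_tendsto_zero]
    exact hsqrt0 _ (fun k => norm_nonneg _) hdx2
  have hdu0 : Filter.Tendsto (fun k => u k - u (k+1)) Filter.atTop (nhds 0) := by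
    rw [tendsto_zero_iff_norm_tendsto_zero]
    exact hsqrt0 _ (fun k => norm_nonneg _) hdu2
  -- boundedness and compactness
  set R := Real.sqrt (d 0 / δ) with hRdef
  have hbound : ∀ k, ((x k, u k) : EuclideanSpace ℝ (Fin n) × EuclideanSpace ℝ (Fin m))
      ∈ Metric.closedBall ((xh, uh) :
        EuclideanSpace ℝ (Fin n) × EuclideanSpace ℝ (Fin m)) R := by
    intro k
    rw [Metric.mem_closedBall, Prod.dist_eq]
    have hk : d k ≤ d 0 := hdanti (Nat.zero_le k)
    have hlk := hlow (x k - xh) (u k - uh)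
    have hMk : Msq (x k - xh) (u k - uh) = d k := by simp only [hddef]
    rw [hMk] at hlk
    have h1 : ‖x k - xh‖^2 ≤ d 0 / δ := by
      rw [le_div_iff₀ hδpos]
      nlinarith [sq_nonneg ‖u k - uh‖, hδpos.le]
    have h2 : ‖u k - uh‖^2 ≤ d 0 / δ := by
      rw [le_div_iff₀ hδpos]
      nlinarith [sq_nonneg ‖x k - xh‖, hδpos.le]
    apply max_le
    · rw [dist_eq_norm, ← Real.sqrt_sq (norm_nonneg (x k - xh))]
      exact Real.sqrt_le_sqrt h1
    · rw [dist_eq_norm, ← Real.sqrt_sq (norm_nonneg (u k - uh))]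
      exact Real.sqrt_le_sqrt h2
  have hcpt : IsCompact (Metric.closedBall ((xh, uh) :
      EuclideanSpace ℝ (Fin n) × EuclideanSpace ℝ (Fin m)) R) :=
    isCompact_closedBall _ _
  obtain ⟨zb, hzbmem, φ, hφmono, hφconv⟩ := hcpt.tendsto_subseq hbound
  obtain ⟨xb, ub⟩ := zb
  have hxφ : Filter.Tendsto (fun j => x (φ j)) Filter.atTop (nhds xb) := by
    have := (continuous_fst.tendsto ((xb, ub) :
      EuclideanSpace ℝ (Fin n) × EuclideanSpace ℝ (Fin m))).comp hφconv
    simpa [Function.comp_def] using this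
  have huφ : Filter.Tendsto (fun j => u (φ j)) Filter.atTop (nhds ub) := by
    have := (continuous_snd.tendsto ((xb, ub) :
      EuclideanSpace ℝ (Fin n) × EuclideanSpace ℝ (Fin m))).comp hφconv
    simpa [Function.comp_def] using this
  have hφat : Filter.Tendsto φ Filter.atTop Filter.atTop := hφmono.tendsto_atTop
  have hdxφ : Filter.Tendsto (fun j => x (φ j) - x (φ j + 1)) Filter.atTop (nhds 0) := by
    have := hdx0.comp hφat
    simpa [Function.comp_def] using this
  have hduφ : Filter.Tendsto (fun j => u (φ j) - u (φ j + 1)) Filter.atTop (nhds 0) := by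
    have := hdu0.comp hφat
    simpa [Function.comp_def] using this
  have hxφ1 : Filter.Tendsto (fun j => x (φ j + 1)) Filter.atTop (nhds xb) := by
    have := hxφ.sub hdxφ
    simpa using this
  have huφ1 : Filter.Tendsto (fun j => u (φ j + 1)) Filter.atTop (nhds ub) := by
    have := huφ.sub hduφ
    simpa using this
  -- fixed point identities at the limit
  have hfix1 : J (xb - τ • Φt ub) = xb := by
    have hQJ : Filter.Tendsto (fun j => J (x (φ j) - τ • Φt (u (φ j)))) Filter.atTop
        (nhds (J (xb - τ • Φt ub))) := by
      apply (hJcont.tendsto _).comp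
      exact hxφ.sub (((Φt.continuous.tendsto _).comp huφ).const_smul τ)
    have h1 : Filter.Tendsto (fun j => x (φ j + 1)) Filter.atTop
        (nhds (J (xb - τ • Φt ub))) := by
      simp only [hxk]
      exact hQJ
    exact tendsto_nhds_unique h1 hxφ1
  have hutφ : Filter.Tendsto (fun j => ut (φ j)) Filter.atTop
      (nhds (ub + σ • Φ xb)) := by
    have h1 : Filter.Tendsto (fun j => u (φ j) + σ • Φ ((2:ℝ) • x (φ j + 1) - x (φ j)))
        Filter.atTop (nhds (ub + σ • Φ ((2:ℝ) • xb - xb))) :=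
      huφ.add (((Φ.continuous.tendsto _).comp
        ((hxφ1.const_smul (2:ℝ)).sub hxφ)).const_smul σ)
    rw [show (2:ℝ) • xb - xb = xb by module] at h1
    simp only [hutk]
    exact h1
  have hfix2 : ub = (ub + σ • Φ xb) - σ • P (σ⁻¹ • (ub + σ • Φ xb)) := by
    have h1 : Filter.Tendsto (fun j => u (φ j + 1)) Filter.atTop
        (nhds ((ub + σ • Φ xb) - σ • P (σ⁻¹ • (ub + σ • Φ xb)))) := by
      simp only [huk]
      exact hutφ.sub (((hPcont.tendsto _).comp (hutφ.const_smul σ⁻¹)).const_smul σ)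
    exact tendsto_nhds_unique huφ1 h1
  have hPfix : P (σ⁻¹ • (ub + σ • Φ xb)) = Φ xb := by
    have h2 := eq_sub_iff_add_eq.mp hfix2
    have h3 : σ • P (σ⁻¹ • (ub + σ • Φ xb)) = σ • Φ xb := by
      have h4 : ub + σ • P (σ⁻¹ • (ub + σ • Φ xb)) = ub + σ • Φ xb := by
        rw [h2]
      exact add_left_cancel h4
    exact smul_right_injective _ hσ' h3
  -- the limit is a solution
  have hxbball : ‖Φ xb - y‖ ≤ ε := by
    rw [← hPfix]
    exact (hP _).1
  have hubN : ub ∈ N (Φ xb) := by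
    rw [hN]
    refine ⟨hxbball, fun c hc => ?_⟩
    have hvi := hPVI (σ⁻¹ • (ub + σ • Φ xb)) c hc
    rw [hPfix] at hvi
    have e : σ⁻¹ • (ub + σ • Φ xb) - Φ xb = σ⁻¹ • ub := by
      match_scalars <;> field_simp <;> ring
    rw [e, real_inner_smul_left] at hvi
    have hσinv : (0:ℝ) < σ⁻¹ := inv_pos.mpr hσ
    nlinarith
  have hbbB : (xb - τ • Φt ub) - xb ∈ B xb := by
    rw [hB]
    exact ⟨xb - τ • Φt ub, hfix1, rfl⟩
  have hsumb : Φt ub + τ⁻¹ • ((xb - τ • Φt ub) - xb) = 0 := by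
    have e : (xb - τ • Φt ub) - xb = -(τ • Φt ub) := by abel
    rw [e, smul_neg, smul_smul, inv_mul_cancel₀ hτ', one_smul]
    abel
  -- Fejér monotonicity with respect to the limit solution gives full convergence
  have keyb := key xb ub _ hubN hbbB hsumb
  set e : ℕ → ℝ := fun k => Msq (x k - xb) (u k - ub) with hedef
  have he0 : ∀ k, 0 ≤ e k := fun k => hMsq0 _ _
  have heanti : Antitone e := antitone_nat_of_succ_le (fun k => by
    have h := keyb k
    have h2 := hMsq0 (x k - x (k+1)) (u k - u (k+1))
    simp only [hedef]
    linarith)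
  have heφ : Filter.Tendsto (fun j => e (φ j)) Filter.atTop (nhds 0) := by
    have h1 : Filter.Tendsto (fun j => x (φ j) - xb) Filter.atTop (nhds 0) := by
      simpa using hxφ.sub (tendsto_const_nhds (x := xb))
    have h2 : Filter.Tendsto (fun j => u (φ j) - ub) Filter.atTop (nhds 0) := by
      simpa using huφ.sub (tendsto_const_nhds (x := ub))
    have h3 := (hMcont.tendsto ((0, 0) :
      EuclideanSpace ℝ (Fin n) × EuclideanSpace ℝ (Fin m))).comp (h1.prodMk_nhds h2)
    have hM00 : Msq 0 0 = 0 := by simp [hMsqdef]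
    simp only [Function.comp_def, hM00] at h3
    simpa [hedef] using h3
  have heconv : Filter.Tendsto e Filter.atTop (nhds 0) := by
    have hbdde : BddBelow (Set.range e) := ⟨0, by rintro r ⟨k, rfl⟩; exact he0 k⟩
    have h1 : Filter.Tendsto e Filter.atTop (nhds (⨅ k, e k)) :=
      tendsto_atTop_ciInf heanti hbdde
    have h2 : Filter.Tendsto (fun j => e (φ j)) Filter.atTop (nhds (⨅ k, e k)) := by
      have := h1.comp hφat
      simpa [Function.comp_def] using this
    have h0 : (⨅ k, e k) = 0 := tendsto_nhds_unique h2 heφ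
    rwa [h0] at h1
  have hx2 : Filter.Tendsto (fun k => ‖x k - xb‖^2) Filter.atTop (nhds 0) := by
    have heconvd : Filter.Tendsto (fun k => e k / δ) Filter.atTop (nhds 0) := by
      simpa using heconv.div_const δ
    apply squeeze_zero (fun k => sq_nonneg _) (fun k => ?_) heconvd
    rw [le_div_iff₀ hδpos]
    have hlk := hlow (x k - xb) (u k - ub)
    have hMk : Msq (x k - xb) (u k - ub) = e k := by simp only [hedef]
    rw [hMk] at hlk
    nlinarith [sq_nonneg ‖u k - ub‖, hδpos.le]
  have hxconv : Filter.Tendsto x Filter.atTop (nhds xb) := by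
    rw [← tendsto_sub_nhds_zero_iff]
    rw [tendsto_zero_iff_norm_tendsto_zero]
    exact hsqrt0 _ (fun k => norm_nonneg _) hx2
  exact ⟨xb, hxconv, ub, (xb - τ • Φt ub) - xb, hubN, hbbB, hsumb⟩
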